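/- Let Δ ≥ 4, let G be a finite simple graph of maximum degree at most Δ, let M be the output matching of a 1-2-MinGreedy execution on G, and let M* be a maximum matching of G in normal form with respect to M. Let X be an M-augmenting path of (V, M ∪ M*) with creation step i (selected vertex u_i, matched with v_i), suppose the degree of u_i in G_{i-1} is at least 3, and suppose a degree-1 endpoint exists after creation of X, i.e. some transfer with source u_i or v_i targets an endpoint w with degree exactly 1 in G_i. Let u_{i+1}, v_{i+1} be the vertices matched at step i+1 with selected vertex u_{i+1}. Define W as the set of endpoints of M-augmenting paths of (V, M ∪ M*) that are adjacent in G_{i-1} to u_i or v_i and have degree at least 3 in G_{i-1}; W_1 = {w ∈ W : deg_{G_i}(w) = 1}; W_2 = {w ∈ W : deg_{G_i}(w) = 2}; for f ∈ {1,2}, W_1^f = {w ∈ W_1 : exactly f of the edges {w,u_i}, {w,v_i} lie in F}; and let E(W) be the set of edges of G_{i-1} joining u_i or v_i to a vertex of W. Then: (a) the number of transfers with source u_i or v_i equals 2|W_1^2| + |W_1^1|; (b) the number of uncanceled transfers with source v_{i+1} is at most |W_1^1| + |W_2|; (c) 2|W_1^2| + 2|W_1^1| + |W_2| ≤ |E(W)|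 ≤ 2(Δ−2). -/

import Mathlib

namespace MinGreedy

noncomputable section

open SimpleGraph

/-- The degree of a vertex `x` in the graph `H`. -/
def deg {V : Type} (H : SimpleGraph V) (x : V) : ℕ :=
  (H.neighborSet x).ncard

/-- `M` is a matching of `G`, given as a set of pairwise disjoint edges of `G`. -/
def IsMatchingSet {V : Type} (G : SimpleGraph V) (M : Set (Sym2 V)) : Prop :=
  M ⊆ G.edgeSet ∧ ∀ e ∈ M, ∀ f ∈ M, e ≠ f → ∀ x : V, x ∈ e → x ∉ f

/-- `M` is a maximum matching of `G`. -/
def IsMaxMatchingSet {V : Type} (G : SimpleGraph V) (M : Set (Sym2 V)) : Prop :=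
  IsMatchingSet G M ∧ ∀ N : Set (Sym2 V), IsMatchingSet G N → N.ncard ≤ M.ncard

/-- `ν G`, the maximum size of a matching of `G`. -/
def nu {V : Type} (G : SimpleGraph V) : ℕ :=
  sSup {n | ∃ M : Set (Sym2 V), IsMatchingSet G M ∧ M.ncard = n}

/-- `G` has maximum degree at most `Δ`. -/
def maxDegLE {V : Type} (G : SimpleGraph V) (Δ : ℕ) : Prop :=
  ∀ x : V, deg G x ≤ Δ

/-- An execution of a greedy matching algorithm on `G`: in step `i` (`0 ≤ i < k`) the
edge `{sel i, oth i}` of `Gs i` is picked with selected vertex `sel i`, and `Gs (i+1)`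
is obtained from `Gs i` by deleting all edges incident with `sel i` or `oth i`;
at the end `Gs k` has no edges. -/
structure GreedyExec (V : Type) (G : SimpleGraph V) where
  k : ℕ
  Gs : ℕ → SimpleGraph V
  sel : ℕ → V
  oth : ℕ → V
  init : Gs 0 = G
  adj : ∀ i < k, (Gs i).Adj (sel i) (oth i)
  step : ∀ i < k, Gs (i + 1) =
    SimpleGraph.fromEdgeSet {e | e ∈ (Gs i).edgeSet ∧ sel i ∉ e ∧ oth i ∉ e}
  final : (Gs k).edgeSet = ∅

/-- The output matching `M = {e_1, …, e_k}` of an execution. -/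
def GreedyExec.M {V : Type} {G : SimpleGraph V} (E : GreedyExec V G) : Set (Sym2 V) :=
  {e | ∃ i < E.k, e = s(E.sel i, E.oth i)}

/-- The execution is a MinGreedy execution: in each step the selected vertex has
minimum positive degree in the current graph. -/
def GreedyExec.IsMinGreedy {V : Type} {G : SimpleGraph V} (E : GreedyExec V G) : Prop :=
  ∀ i < E.k, ∀ x : V, 0 < deg (E.Gs i) x → deg (E.Gs i) (E.sel i) ≤ deg (E.Gs i) x

/-- The execution is a 1-2-MinGreedy execution: whenever the current graph has a vertex of
degree 1 or 2, the selected vertex has minimum positive degree in the current graph. -/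
def GreedyExec.Is12MinGreedy {V : Type} {G : SimpleGraph V} (E : GreedyExec V G) : Prop :=
  ∀ i < E.k, (∃ x : V, deg (E.Gs i) x = 1 ∨ deg (E.Gs i) x = 2) →
    ∀ x : V, 0 < deg (E.Gs i) x → deg (E.Gs i) (E.sel i) ≤ deg (E.Gs i) x

/-- `p 0, p 1, …, p (2m+1)` is an `M`-augmenting path: an `M`-alternating path whose
first and last edges lie in `Mopt` and whose two endpoints `p 0` and `p (2m+1)` are
not covered by `M`; it has `m` edges of `M` and `m+1` edges of `Mopt`. -/
def IsAugPath {V : Type} (M Mopt : Set (Sym2 V)) (m : ℕ) (p : ℕ → V) : Prop :=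
  (∀ i ≤ 2 * m + 1, ∀ j ≤ 2 * m + 1, p i = p j → i = j) ∧
  (∀ j ≤ 2 * m, (j % 2 = 0 → s(p j, p (j + 1)) ∈ Mopt) ∧
                (j % 2 = 1 → s(p j, p (j + 1)) ∈ M)) ∧
  (∀ e ∈ M, p 0 ∉ e ∧ p (2 * m + 1) ∉ e)

/-- The vertex set of the path `p 0, …, p (2m+1)`. -/
def pathSupp {V : Type} (m : ℕ) (p : ℕ → V) : Set V := p '' {j | j ≤ 2 * m + 1}

/-- `w` is an endpoint of an `M`-augmenting path of the graph `(V, M ∪ Mopt)`. -/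
def IsPathEndpoint {V : Type} (M Mopt : Set (Sym2 V)) (w : V) : Prop :=
  ∃ m p, IsAugPath M Mopt m p ∧ (w = p 0 ∨ w = p (2 * m + 1))

/-- `S` is the vertex set of a singleton component: a single edge of `M ∩ Mopt`. -/
def IsSingletonComp {V : Type} (M Mopt : Set (Sym2 V)) (S : Set V) : Prop :=
  ∃ x y : V, x ≠ y ∧ s(x, y) ∈ M ∧ s(x, y) ∈ Mopt ∧ S = ({x, y} : Set V)

/-- `Mopt` is a maximum matching of `G` in normal form with respect to `M`: every
(nontrivial) connected component of the graph `(V, M ∪ Mopt)` is a singleton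
(a single edge of `M ∩ Mopt`) or an `M`-augmenting path. -/
def NormalForm {V : Type} (G : SimpleGraph V) (M Mopt : Set (Sym2 V)) : Prop :=
  IsMaxMatchingSet G Mopt ∧
  ∀ C : (SimpleGraph.fromEdgeSet (M ∪ Mopt)).ConnectedComponent,
    2 ≤ C.supp.ncard →
    IsSingletonComp M Mopt C.supp ∨
    ∃ m p, IsAugPath M Mopt m p ∧ C.supp = pathSupp m p

/-- `{x, y}` is an edge of `F = E ∖ (M ∪ Mopt)`. -/
def FEdge {V : Type} (G : SimpleGraph V) (M Mopt : Set (Sym2 V)) (x y : V) : Prop :=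
  s(x, y) ∈ G.edgeSet ∧ s(x, y) ∉ M ∧ s(x, y) ∉ Mopt

/-- The number of `F`-edges incident with `x`. -/
def Fdeg {V : Type} (G : SimpleGraph V) (M Mopt : Set (Sym2 V)) (x : V) : ℕ :=
  {e : Sym2 V | e ∈ G.edgeSet ∧ e ∉ M ∧ e ∉ Mopt ∧ x ∈ e}.ncard

/-- `x` is matched at step `i` of the execution, i.e. `x ∈ e_i`. -/
def matchedAt {V : Type} {G : SimpleGraph V} (E : GreedyExec V G) (i : ℕ) (x : V) : Prop :=
  i < E.k ∧ (x = E.sel i ∨ x = E.oth i)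

/-- The `F`-edge `{v, w}` is a transfer from `v` to `w` arising at step `i`: `w` is an
endpoint of an `M`-augmenting path, `v` is matched at step `i` and the degree of `w`
in the graph after step `i` is at most 1. -/
def transferAt {V : Type} {G : SimpleGraph V} (E : GreedyExec V G)
    (M Mopt : Set (Sym2 V)) (i : ℕ) (v w : V) : Prop :=
  FEdge G M Mopt v w ∧ IsPathEndpoint M Mopt w ∧ matchedAt E i v ∧
  deg (E.Gs (i + 1)) w ≤ 1

/-- The edge `{v, w}` is a transfer from `v` to `w`. -/
def IsTransfer {V : Type} {G : SimpleGraph V} (E : GreedyExec V G)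
    (M Mopt : Set (Sym2 V)) (v w : V) : Prop :=
  ∃ i, transferAt E M Mopt i v w

/-- `(v, w)` is an uncanceled transfer arising at step `i`: it is a transfer arising at
step `i` and it is not the case that (`w` has degree exactly 1 before step `i` with its
unique incident edge being `{v, w}`, and `w` is the target of at least two uncanceled
transfers arising at steps before `i`). -/
def uncanceledAt {V : Type} {G : SimpleGraph V} (E : GreedyExec V G)
    (M Mopt : Set (Sym2 V)) (i : ℕ) : V → V → Prop :=
  Nat.strongRecOn (motive := fun _ => V → V → Prop) i (fun i ih v w =>
    transferAt E M Mopt i v w ∧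
    ¬(deg (E.Gs i) w = 1 ∧ (E.Gs i).Adj v w ∧
      ∃ (j₁ : ℕ) (h₁ : j₁ < i) (v₁ : V) (j₂ : ℕ) (h₂ : j₂ < i) (v₂ : V),
        ih j₁ h₁ v₁ w ∧ ih j₂ h₂ v₂ w ∧ (j₁, v₁) ≠ (j₂, v₂)))

/-- `(v, w)` is an uncanceled transfer. -/
def IsUncanceledTransfer {V : Type} {G : SimpleGraph V} (E : GreedyExec V G)
    (M Mopt : Set (Sym2 V)) (v w : V) : Prop :=
  ∃ i, uncanceledAt E M Mopt i v w

/-- `(v, w)` is a canceled transfer. -/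
def IsCanceledTransfer {V : Type} {G : SimpleGraph V} (E : GreedyExec V G)
    (M Mopt : Set (Sym2 V)) (v w : V) : Prop :=
  IsTransfer E M Mopt v w ∧ ¬IsUncanceledTransfer E M Mopt v w

/-- `d_X`: the number of transfers whose source lies in the vertex set `X`. -/
def debits {V : Type} {G : SimpleGraph V} (E : GreedyExec V G)
    (M Mopt : Set (Sym2 V)) (X : Set V) : ℕ :=
  {q : V × V | IsTransfer E M Mopt q.1 q.2 ∧ q.1 ∈ X}.ncard

/-- `c_X`: the number of transfers whose target lies in the vertex set `X`. -/
def credits {V : Type} {G : SimpleGraph V} (E : GreedyExec V G)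
    (M Mopt : Set (Sym2 V)) (X : Set V) : ℕ :=
  {q : V × V | IsTransfer E M Mopt q.1 q.2 ∧ q.2 ∈ X}.ncard

/-- `i` is the creation step of the component with vertex set `X`: the step in which the
first edge of `M` lying in `X` is picked. -/
def creationStep {V : Type} {G : SimpleGraph V} (E : GreedyExec V G)
    (X : Set V) (i : ℕ) : Prop :=
  i < E.k ∧ E.sel i ∈ X ∧ E.oth i ∈ X ∧ ∀ j < i, ¬(E.sel j ∈ X ∧ E.oth j ∈ X)

/-- A degree-1 endpoint exists after the creation step `i`: some transfer with source
`sel i` or `oth i` targets an endpoint `w` of degree exactly 1 after step `i`. -/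
def Deg1EndpointAfter {V : Type} {G : SimpleGraph V} (E : GreedyExec V G)
    (M Mopt : Set (Sym2 V)) (i : ℕ) : Prop :=
  ∃ v w : V, (v = E.sel i ∨ v = E.oth i) ∧ transferAt E M Mopt i v w ∧
    deg (E.Gs (i + 1)) w = 1
set_option linter.unusedSectionVars false
set_option linter.unusedVariables false

section Aux

variable {V : Type} [Fintype V] {G : SimpleGraph V} (E : GreedyExec V G)


lemma deg_pos_iff (H : SimpleGraph V) (x : V) : 0 < deg H x ↔ ∃ y, H.Adj x y := by
  rw [deg, Set.ncard_pos (Set.toFinite _)]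
  constructor
  · rintro ⟨y, hy⟩; exact ⟨y, hy⟩
  · rintro ⟨y, hy⟩; exact ⟨y, hy⟩

lemma adj_succ {j : ℕ} (hj : j < E.k) {x y : V} :
    (E.Gs (j + 1)).Adj x y ↔ (E.Gs j).Adj x y ∧
      x ≠ E.sel j ∧ x ≠ E.oth j ∧ y ≠ E.sel j ∧ y ≠ E.oth j := by
  rw [E.step j hj, SimpleGraph.fromEdgeSet_adj]
  simp only [Set.mem_setOf_eq, SimpleGraph.mem_edgeSet, Sym2.mem_iff]
  constructor
  · rintro ⟨⟨h, hs, ho⟩, _⟩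
    push_neg at hs ho
    exact ⟨h, fun hc => hs.1 hc.symm, fun hc => ho.1 hc.symm,
      fun hc => hs.2 hc.symm, fun hc => ho.2 hc.symm⟩
  · rintro ⟨h, h1, h2, h3, h4⟩
    refine ⟨⟨h, ?_, ?_⟩, h.ne⟩
    · rintro (rfl | rfl)
      · exact h1 rfl
      · exact h3 rfl
    · rintro (rfl | rfl)
      · exact h2 rfl
      · exact h4 rfl

lemma adj_mono : ∀ {b a : ℕ}, a ≤ b → b ≤ E.k → ∀ {x y : V},
    (E.Gs b).Adj x y → (E.Gs a).Adj x y := by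
  intro b
  induction b with
  | zero =>
    intro a hab _ x y h
    have : a = 0 := by omega
    exact this ▸ h
  | succ n ih =>
    intro a hab hbk x y h
    rcases Nat.eq_or_lt_of_le hab with rfl | hlt
    · exact h
    · have hn : n < E.k := by omega
      have := (adj_succ E hn).1 h
      exact ih (by omega) (by omega) this.1

lemma not_adj_of_matched {j j' : ℕ} {x : V} (hm : matchedAt E j x)
    (hjj : j < j') (hj'k : j' ≤ E.k) (y : V) : ¬ (E.Gs j').Adj x y := by
  intro h
  have h1 : (E.Gs (j + 1)).Adj x y := adj_mono E (by omega) hj'k h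
  have := ((adj_succ E hm.1).1 h1).2
  rcases hm.2 with rfl | rfl
  · exact this.1 rfl
  · exact this.2.1 rfl

lemma matched_unique {j j' : ℕ} {x : V} (hm : matchedAt E j x)
    (hm' : matchedAt E j' x) : j = j' := by
  by_contra hne
  rcases Nat.lt_or_ge j j' with h | h
  · have hadj : ∃ y, (E.Gs j').Adj x y := by
      rcases hm'.2 with rfl | rfl
      · exact ⟨E.oth j', E.adj j' hm'.1⟩
      · exact ⟨E.sel j', (E.adj j' hm'.1).symm⟩
    rcases hadj with ⟨y, hy⟩
    exact not_adj_of_matched E hm h (le_of_lt hm'.1) y hy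
  · have hlt : j' < j := by omega
    have hadj : ∃ y, (E.Gs j).Adj x y := by
      rcases hm.2 with rfl | rfl
      · exact ⟨E.oth j, E.adj j hm.1⟩
      · exact ⟨E.sel j, (E.adj j hm.1).symm⟩
    rcases hadj with ⟨y, hy⟩
    exact not_adj_of_matched E hm' hlt (le_of_lt hm.1) y hy

lemma endpoint_not_matched {Mopt : Set (Sym2 V)} {w : V}
    (hw : IsPathEndpoint E.M Mopt w) (j : ℕ) : ¬ matchedAt E j w := by
  rintro ⟨hjk, hw'⟩
  obtain ⟨m, p, hpath, hend⟩ := hw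
  have hmem : s(E.sel j, E.oth j) ∈ E.M := ⟨j, hjk, rfl⟩
  have := hpath.2.2 _ hmem
  have hwin : w ∈ s(E.sel j, E.oth j) := by
    rcases hw' with rfl | rfl
    · exact Sym2.mem_mk_left _ _
    · exact Sym2.mem_mk_right _ _
  rcases hend with rfl | rfl
  · exact this.1 hwin
  · exact this.2 hwin

lemma edge_survives : ∀ (n : ℕ), n ≤ E.k → ∀ {x y : V}, G.Adj x y →
    (∀ j < n, ¬ matchedAt E j x) → (∀ j < n, ¬ matchedAt E j y) →
    (E.Gs n).Adj x y := by
  intro n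
  induction n with
  | zero => intro _ x y h _ _; rw [E.init]; exact h
  | succ n ih =>
    intro hnk x y h hx hy
    have hn : n < E.k := by omega
    rw [adj_succ E hn]
    refine ⟨ih (by omega) h (fun j hj => hx j (by omega)) (fun j hj => hy j (by omega)),
      ?_, ?_, ?_, ?_⟩
    · rintro rfl; exact hx n (by omega) ⟨hn, Or.inl rfl⟩
    · rintro rfl; exact hx n (by omega) ⟨hn, Or.inr rfl⟩
    · rintro rfl; exact hy n (by omega) ⟨hn, Or.inl rfl⟩
    · rintro rfl; exact hy n (by omega) ⟨hn, Or.inr rfl⟩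

lemma nbhd_succ {j : ℕ} (hj : j < E.k) {w : V} (hw1 : w ≠ E.sel j) (hw2 : w ≠ E.oth j) :
    (E.Gs (j + 1)).neighborSet w = (E.Gs j).neighborSet w \ {E.sel j, E.oth j} := by
  ext y
  simp only [SimpleGraph.mem_neighborSet, Set.mem_diff, Set.mem_insert_iff,
    Set.mem_singleton_iff, adj_succ E hj]
  constructor
  · rintro ⟨h, _, _, h3, h4⟩
    exact ⟨h, by tauto⟩
  · rintro ⟨h, hy⟩
    push_neg at hy
    exact ⟨h, hw1, hw2, hy.1, hy.2⟩

lemma deg_mono {a b : ℕ} (hab : a ≤ b) (hbk : b ≤ E.k) (w : V) :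
    deg (E.Gs b) w ≤ deg (E.Gs a) w := by
  apply Set.ncard_le_ncard _ (Set.toFinite _)
  intro y hy
  exact adj_mono E hab hbk hy

lemma deg_drop_le {j : ℕ} (hj : j < E.k) {w : V} (hw1 : w ≠ E.sel j) (hw2 : w ≠ E.oth j) :
    deg (E.Gs j) w ≤ deg (E.Gs (j + 1)) w + 2 := by
  have hsub : (E.Gs j).neighborSet w ⊆
      (E.Gs (j + 1)).neighborSet w ∪ {E.sel j, E.oth j} := by
    rw [nbhd_succ E hj hw1 hw2]
    intro y hy
    by_cases hc : y ∈ ({E.sel j, E.oth j} : Set V)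
    · exact Or.inr hc
    · exact Or.inl ⟨hy, hc⟩
  calc deg (E.Gs j) w ≤ ((E.Gs (j + 1)).neighborSet w ∪ {E.sel j, E.oth j}).ncard :=
        Set.ncard_le_ncard hsub (Set.toFinite _)
    _ ≤ deg (E.Gs (j + 1)) w + ({E.sel j, E.oth j} : Set V).ncard := Set.ncard_union_le _ _
    _ ≤ deg (E.Gs (j + 1)) w + 2 := by
        have := Set.ncard_insert_le (E.sel j) ({E.oth j} : Set V)
        have h1 := Set.ncard_singleton (E.oth j)
        omega

lemma adj_both_of_drop2 {j : ℕ} (hj : j < E.k) {w : V} (hw1 : w ≠ E.sel j)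
    (hw2 : w ≠ E.oth j) (h : deg (E.Gs (j + 1)) w + 2 ≤ deg (E.Gs j) w) :
    (E.Gs j).Adj w (E.sel j) ∧ (E.Gs j).Adj w (E.oth j) := by
  constructor
  · by_contra hc
    have : (E.Gs j).neighborSet w ⊆ ((E.Gs (j+1)).neighborSet w) ∪ {E.oth j} := by
      rw [nbhd_succ E hj hw1 hw2]
      intro y hy
      by_cases hco : y = E.oth j
      · exact Or.inr hco
      · refine Or.inl ⟨hy, ?_⟩
        rintro (rfl | rfl)
        · exact hc hy
        · exact hco rfl
    have h2 := (Set.ncard_le_ncard this (Set.toFinite _)).trans (Set.ncard_union_le _ _)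
    rw [Set.ncard_singleton] at h2
    change deg (E.Gs j) w ≤ deg (E.Gs (j+1)) w + 1 at h2
    omega
  · by_contra hc
    have : (E.Gs j).neighborSet w ⊆ ((E.Gs (j+1)).neighborSet w) ∪ {E.sel j} := by
      rw [nbhd_succ E hj hw1 hw2]
      intro y hy
      by_cases hco : y = E.sel j
      · exact Or.inr hco
      · refine Or.inl ⟨hy, ?_⟩
        rintro (rfl | rfl)
        · exact hco rfl
        · exact hc hy
    have h2 := (Set.ncard_le_ncard this (Set.toFinite _)).trans (Set.ncard_union_le _ _)
    rw [Set.ncard_singleton] at h2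
    change deg (E.Gs j) w ≤ deg (E.Gs (j+1)) w + 1 at h2
    omega

lemma adj_one_of_drop1 {j : ℕ} (hj : j < E.k) {w : V} (hw1 : w ≠ E.sel j)
    (hw2 : w ≠ E.oth j) (h : deg (E.Gs (j + 1)) w < deg (E.Gs j) w) :
    (E.Gs j).Adj w (E.sel j) ∨ (E.Gs j).Adj w (E.oth j) := by
  by_contra hc
  push_neg at hc
  have heq : (E.Gs (j + 1)).neighborSet w = (E.Gs j).neighborSet w := by
    rw [nbhd_succ E hj hw1 hw2]
    ext y
    simp only [Set.mem_diff, Set.mem_insert_iff, Set.mem_singleton_iff,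
      SimpleGraph.mem_neighborSet]
    constructor
    · exact fun h => h.1
    · intro h
      refine ⟨h, ?_⟩
      rintro (rfl | rfl)
      · exact hc.1 h
      · exact hc.2 h
  change deg _ w < deg _ w at h
  rw [deg, deg, heq] at h
  omega
lemma uncanceledAt_iff (M Mopt : Set (Sym2 V)) (i : ℕ) (v w : V) :
    uncanceledAt E M Mopt i v w ↔
    transferAt E M Mopt i v w ∧
    ¬(deg (E.Gs i) w = 1 ∧ (E.Gs i).Adj v w ∧
      ∃ (j₁ : ℕ) (_ : j₁ < i) (v₁ : V) (j₂ : ℕ) (_ : j₂ < i) (v₂ : V),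
        uncanceledAt E M Mopt j₁ v₁ w ∧ uncanceledAt E M Mopt j₂ v₂ w ∧
        (j₁, v₁) ≠ (j₂, v₂)) := by
  unfold uncanceledAt
  rw [Nat.strongRecOn_eq]

lemma FEdge_comm {M Mopt : Set (Sym2 V)} {x y : V} :
    FEdge G M Mopt x y ↔ FEdge G M Mopt y x := by
  unfold FEdge
  rw [Sym2.eq_swap]

lemma FEdge_adj {M Mopt : Set (Sym2 V)} {x y : V} (h : FEdge G M Mopt x y) :
    G.Adj x y := h.1

lemma not_mem_M_of_endpoint {Mopt : Set (Sym2 V)} {w : V}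
    (hw : IsPathEndpoint E.M Mopt w) {e : Sym2 V} (he : e ∈ E.M) : w ∉ e := by
  intro hwe
  obtain ⟨j, hj, rfl⟩ := he
  rw [Sym2.mem_iff] at hwe
  exact endpoint_not_matched E hw j ⟨hj, hwe⟩
end Aux

/-- the degree-≥3 creation step case, with the endpoint sets
W, W₁, W₂, W₁¹, W₁² and the edge set E(W). -/
theorem deg3_creation_coin_bounds {V : Type} [Fintype V] (Δ : ℕ) (hΔ : 4 ≤ Δ)
    (G : SimpleGraph V) (hdeg : maxDegLE G Δ)
    (E : GreedyExec V G) (h12 : E.Is12MinGreedy)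
    (Mopt : Set (Sym2 V)) (hnf : NormalForm G E.M Mopt)
    (m : ℕ) (p : ℕ → V) (hp : IsAugPath E.M Mopt m p)
    (i : ℕ) (hc : creationStep E (pathSupp m p) i)
    (hdu : 3 ≤ deg (E.Gs i) (E.sel i))
    (hd1 : Deg1EndpointAfter E E.M Mopt i)
    (W W1 W2 W11 W12 : Set V) (EW : Set (Sym2 V))
    (hW : W = {w : V | IsPathEndpoint E.M Mopt w ∧
      ((E.Gs i).Adj w (E.sel i) ∨ (E.Gs i).Adj w (E.oth i)) ∧ 3 ≤ deg (E.Gs i) w})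
    (hW1 : W1 = {w ∈ W | deg (E.Gs (i + 1)) w = 1})
    (hW2 : W2 = {w ∈ W | deg (E.Gs (i + 1)) w = 2})
    (hW11 : W11 = {w ∈ W1 |
      (FEdge G E.M Mopt w (E.sel i) ∧ ¬FEdge G E.M Mopt w (E.oth i)) ∨
      (¬FEdge G E.M Mopt w (E.sel i) ∧ FEdge G E.M Mopt w (E.oth i))})
    (hW12 : W12 = {w ∈ W1 | FEdge G E.M Mopt w (E.sel i) ∧ FEdge G E.M Mopt w (E.oth i)})
    (hEW : EW = {e : Sym2 V | ∃ w ∈ W,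
      (e = s(E.sel i, w) ∨ e = s(E.oth i, w)) ∧ e ∈ (E.Gs i).edgeSet}) :
    ({q : V × V | IsTransfer E E.M Mopt q.1 q.2 ∧
        (q.1 = E.sel i ∨ q.1 = E.oth i)}.ncard = 2 * W12.ncard + W11.ncard) ∧
    ({q : V × V | IsUncanceledTransfer E E.M Mopt q.1 q.2 ∧
        q.1 = E.oth (i + 1)}.ncard ≤ W11.ncard + W2.ncard) ∧
    (2 * W12.ncard + 2 * W11.ncard + W2.ncard ≤ EW.ncard ∧ EW.ncard ≤ 2 * (Δ - 2)) := by
  set u := E.sel i with hu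
  set v := E.oth i with hv
  have hik : i < E.k := hc.1
  have hadjuv : (E.Gs i).Adj u v := E.adj i hik
  have huv : u ≠ v := hadjuv.ne
  have hmu : matchedAt E i u := ⟨hik, Or.inl rfl⟩
  have hmv : matchedAt E i v := ⟨hik, Or.inr rfl⟩
  -- all positive degrees at step i are ≥ 3
  have h3 : ∀ x : V, deg (E.Gs i) x = 0 ∨ 3 ≤ deg (E.Gs i) x := by
    intro x
    by_contra hcon
    push_neg at hcon
    have h1 : deg (E.Gs i) x = 1 ∨ deg (E.Gs i) x = 2 := by omega
    have h5 := h12 i hik ⟨x, h1⟩ x (by omega)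
    rw [← hu] at h5
    omega
  -- endpoints are never matched; hence distinct from u, v
  have hep_ne_u : ∀ w : V, IsPathEndpoint E.M Mopt w → w ≠ u := by
    rintro w hw rfl; exact endpoint_not_matched E hw i hmu
  have hep_ne_v : ∀ w : V, IsPathEndpoint E.M Mopt w → w ≠ v := by
    rintro w hw rfl; exact endpoint_not_matched E hw i hmv
  -- edges from u or v to endpoints survive to step i
  have hsurv : ∀ x w : V, (x = u ∨ x = v) → IsPathEndpoint E.M Mopt w →
      G.Adj x w → (E.Gs i).Adj x w := by
    intro x w hx hw hadj
    refine edge_survives E i (le_of_lt hik) hadj ?_ ?_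
    · intro j hj hm
      have : j = i := by
        rcases hx with rfl | rfl
        · exact matched_unique E hm hmu
        · exact matched_unique E hm hmv
      omega
    · intro j _ hm
      exact endpoint_not_matched E hw j hm
  -- characterization of transfers with source u or v
  have hchar : ∀ x w : V, (x = u ∨ x = v) →
      (IsTransfer E E.M Mopt x w ↔ (w ∈ W1 ∧ FEdge G E.M Mopt w x)) := by
    intro x w hx
    constructor
    · rintro ⟨j, hF, hep, hmx, hdegw⟩
      have hji : j = i := by
        rcases hx with rfl | rfl
        · exact matched_unique E hmx hmu
        · exact matched_unique E hmx hmv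
      rw [hji] at hmx hdegw
      have hadjxw : (E.Gs i).Adj x w := hsurv x w hx hep (FEdge_adj hF)
      have hdpos : 0 < deg (E.Gs i) w := (deg_pos_iff _ w).2 ⟨x, hadjxw.symm⟩
      have hd3 : 3 ≤ deg (E.Gs i) w := by rcases h3 w with h | h; omega; exact h
      have hwu : w ≠ u := hep_ne_u w hep
      have hwv : w ≠ v := hep_ne_v w hep
      have hdrop := deg_drop_le E hik (w := w) hwu hwv
      have hdeq : deg (E.Gs (i + 1)) w = 1 := by omega
      have hWmem : w ∈ W := by
        rw [hW]
        refine ⟨hep, ?_, hd3⟩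
        rcases hx with rfl | rfl
        · exact Or.inl hadjxw.symm
        · exact Or.inr hadjxw.symm
      exact ⟨by rw [hW1]; exact ⟨hWmem, hdeq⟩, FEdge_comm.1 hF⟩
    · rintro ⟨hw1, hF⟩
      rw [hW1] at hw1
      obtain ⟨hWmem, hdeq⟩ := hw1
      rw [hW] at hWmem
      refine ⟨i, FEdge_comm.1 hF, hWmem.1, ?_, by omega⟩
      rcases hx with rfl | rfl
      · exact hmu
      · exact hmv
  -- PART (a)
  have parta : ({q : V × V | IsTransfer E E.M Mopt q.1 q.2 ∧
      (q.1 = u ∨ q.1 = v)}.ncard = 2 * W12.ncard + W11.ncard) := by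
    set Au : Set V := {w | w ∈ W1 ∧ FEdge G E.M Mopt w u} with hAu
    set Av : Set V := {w | w ∈ W1 ∧ FEdge G E.M Mopt w v} with hAv
    have hset : {q : V × V | IsTransfer E E.M Mopt q.1 q.2 ∧ (q.1 = u ∨ q.1 = v)}
        = ((fun w => (u, w)) '' Au) ∪ ((fun w => (v, w)) '' Av) := by
      ext ⟨x, w⟩
      simp only [Set.mem_setOf_eq, Set.mem_union, Set.mem_image, Prod.mk.injEq]
      constructor
      · rintro ⟨ht, hx⟩
        rcases hx with rfl | rfl
        · exact Or.inl ⟨w, (hchar _ w (Or.inl rfl)).1 ht, rfl, rfl⟩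
        · exact Or.inr ⟨w, (hchar _ w (Or.inr rfl)).1 ht, rfl, rfl⟩
      · rintro (⟨w', hw', rfl, rfl⟩ | ⟨w', hw', rfl, rfl⟩)
        · exact ⟨(hchar u w' (Or.inl rfl)).2 hw', Or.inl rfl⟩
        · exact ⟨(hchar v w' (Or.inr rfl)).2 hw', Or.inr rfl⟩
    have hdisj : Disjoint ((fun w => (u, w)) '' Au) ((fun w => (v, w)) '' Av) := by
      rw [Set.disjoint_left]
      rintro q ⟨w1, _, rfl⟩ ⟨w2, _, heq⟩
      exact huv (congrArg Prod.fst heq).symm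
    have hAueq : Au = W12 ∪ (W11 ∩ {w | FEdge G E.M Mopt w u}) := by
      ext w
      simp only [hAu, Set.mem_setOf_eq, Set.mem_union, Set.mem_inter_iff]
      constructor
      · rintro ⟨h1, hF⟩
        by_cases hFv : FEdge G E.M Mopt w v
        · exact Or.inl (by rw [hW12]; exact ⟨h1, hF, hFv⟩)
        · exact Or.inr ⟨by rw [hW11]; exact ⟨h1, Or.inl ⟨hF, hFv⟩⟩, hF⟩
      · rintro (h | ⟨h, hF⟩)
        · rw [hW12] at h; exact ⟨h.1, h.2.1⟩
        · rw [hW11] at h; exact ⟨h.1, hF⟩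
    have hAveq : Av = W12 ∪ (W11 ∩ {w | FEdge G E.M Mopt w v}) := by
      ext w
      simp only [hAv, Set.mem_setOf_eq, Set.mem_union, Set.mem_inter_iff]
      constructor
      · rintro ⟨h1, hF⟩
        by_cases hFu : FEdge G E.M Mopt w u
        · exact Or.inl (by rw [hW12]; exact ⟨h1, hFu, hF⟩)
        · exact Or.inr ⟨by rw [hW11]; exact ⟨h1, Or.inr ⟨hFu, hF⟩⟩, hF⟩
      · rintro (h | ⟨h, hF⟩)
        · rw [hW12] at h; exact ⟨h.1, h.2.2⟩
        · rw [hW11] at h; exact ⟨h.1, hF⟩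
    have hd12u : Disjoint W12 (W11 ∩ {w | FEdge G E.M Mopt w u}) := by
      rw [Set.disjoint_left]
      rintro w h12' ⟨h11, _⟩
      rw [hW12] at h12'; rw [hW11] at h11
      rcases h11.2 with ⟨_, h⟩ | ⟨h, _⟩
      · exact h h12'.2.2
      · exact h h12'.2.1
    have hd12v : Disjoint W12 (W11 ∩ {w | FEdge G E.M Mopt w v}) := by
      rw [Set.disjoint_left]
      rintro w h12' ⟨h11, _⟩
      rw [hW12] at h12'; rw [hW11] at h11
      rcases h11.2 with ⟨_, h⟩ | ⟨h, _⟩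
      · exact h h12'.2.2
      · exact h h12'.2.1
    have hW11split : (W11 ∩ {w | FEdge G E.M Mopt w u}).ncard
        + (W11 ∩ {w | FEdge G E.M Mopt w v}).ncard = W11.ncard := by
      rw [← Set.ncard_union_eq ?_ (Set.toFinite _) (Set.toFinite _)]
      · congr 1
        ext w
        simp only [Set.mem_union, Set.mem_inter_iff, Set.mem_setOf_eq]
        constructor
        · rintro (⟨h, _⟩ | ⟨h, _⟩) <;> exact h
        · intro h
          have h' := h
          rw [hW11] at h'
          rcases h'.2 with ⟨hF, _⟩ | ⟨_, hF⟩
          · exact Or.inl ⟨h, hF⟩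
          · exact Or.inr ⟨h, hF⟩
      · rw [Set.disjoint_left]
        rintro w ⟨h11, hFu⟩ ⟨_, hFv⟩
        rw [hW11] at h11
        rcases h11.2 with ⟨_, h⟩ | ⟨h, _⟩
        · exact h hFv
        · exact h hFu
    rw [hset, Set.ncard_union_eq hdisj (Set.toFinite _) (Set.toFinite _),
      Set.ncard_image_of_injective _ (fun a b h => congrArg Prod.snd h),
      Set.ncard_image_of_injective _ (fun a b h => congrArg Prod.snd h),
      hAueq, hAveq, Set.ncard_union_eq hd12u (Set.toFinite _) (Set.toFinite _),
      Set.ncard_union_eq hd12v (Set.toFinite _) (Set.toFinite _)]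
    omega
  -- step i+1 exists
  obtain ⟨v0, w0, hv0, htr0, hdeg0⟩ := hd1
  have hi1k : i + 1 < E.k := by
    by_contra hcon
    have hk : E.k = i + 1 := by omega
    have hpos : 0 < deg (E.Gs (i + 1)) w0 := by omega
    obtain ⟨y, hy⟩ := (deg_pos_iff _ w0).1 hpos
    have hmem : s(w0, y) ∈ (E.Gs (i + 1)).edgeSet := hy
    rw [← hk, E.final] at hmem
    exact hmem
  set t := E.sel (i + 1) with htdef
  set v' := E.oth (i + 1) with hv'def
  have hadj' : (E.Gs (i + 1)).Adj t v' := E.adj (i + 1) hi1k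
  have hmt : matchedAt E (i + 1) t := ⟨hi1k, Or.inl rfl⟩
  have hmv' : matchedAt E (i + 1) v' := ⟨hi1k, Or.inr rfl⟩
  have hdegt : deg (E.Gs (i + 1)) t = 1 := by
    have h5 := h12 (i + 1) hi1k ⟨w0, Or.inl hdeg0⟩ w0 (by omega)
    rw [← htdef] at h5
    have hpos : 0 < deg (E.Gs (i + 1)) t := (deg_pos_iff _ t).2 ⟨v', hadj'⟩
    omega
  have hnbt : (E.Gs (i + 1)).neighborSet t = {v'} := by
    obtain ⟨a, ha⟩ := Set.ncard_eq_one.1 hdegt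
    have hv'mem : v' ∈ (E.Gs (i + 1)).neighborSet t := hadj'
    rw [ha] at hv'mem ⊢
    rw [Set.mem_singleton_iff] at hv'mem
    rw [hv'mem]
  have htne_u : t ≠ u := by
    intro h
    rw [h] at hmt
    have := matched_unique E hmu hmt
    omega
  have htne_v : t ≠ v := by
    intro h
    rw [h] at hmt
    have := matched_unique E hmv hmt
    omega
  have hdegt_i : 3 ≤ deg (E.Gs i) t := by
    have hmono := deg_mono E ((by omega : i ≤ i + 1)) (le_of_lt hi1k) t
    rcases h3 t with h | h
    · omega
    · exact h
  have htadj : (E.Gs i).Adj t u ∧ (E.Gs i).Adj t v := by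
    have hineq : deg (E.Gs (i + 1)) t + 2 ≤ deg (E.Gs i) t := by omega
    exact adj_both_of_drop2 E hik htne_u htne_v hineq
  -- PART (c), upper bound
  have hdegu : deg (E.Gs i) u ≤ Δ := by
    have := deg_mono E (Nat.zero_le i) (le_of_lt hik) u
    rw [E.init] at this
    exact this.trans (hdeg u)
  have hdegv : deg (E.Gs i) v ≤ Δ := by
    have := deg_mono E (Nat.zero_le i) (le_of_lt hik) v
    rw [E.init] at this
    exact this.trans (hdeg v)
  have hvt : v ≠ t := htne_v.symm
  have hut : u ≠ t := htne_u.symm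
  have hcub : EW.ncard ≤ 2 * (Δ - 2) := by
    have hsub : EW ⊆ ((fun w => s(u, w)) '' ((E.Gs i).neighborSet u \ {v, t})) ∪
        ((fun w => s(v, w)) '' ((E.Gs i).neighborSet v \ {u, t})) := by
      rw [hEW]
      rintro e ⟨w, hwW, he, hmem⟩
      have hep : IsPathEndpoint E.M Mopt w := by rw [hW] at hwW; exact hwW.1
      have hwu : w ≠ u := hep_ne_u w hep
      have hwv : w ≠ v := hep_ne_v w hep
      have hwt : w ≠ t := by
        rintro rfl
        exact endpoint_not_matched E hep (i + 1) hmt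
      rcases he with rfl | rfl
      · refine Or.inl ⟨w, ⟨(SimpleGraph.mem_edgeSet _).1 hmem, ?_⟩, rfl⟩
        simp only [Set.mem_insert_iff, Set.mem_singleton_iff]
        push_neg
        exact ⟨hwv, hwt⟩
      · refine Or.inr ⟨w, ⟨(SimpleGraph.mem_edgeSet _).1 hmem, ?_⟩, rfl⟩
        simp only [Set.mem_insert_iff, Set.mem_singleton_iff]
        push_neg
        exact ⟨hwu, hwt⟩
    have hsubu : ({v, t} : Set V) ⊆ (E.Gs i).neighborSet u := by
      rintro y (rfl | rfl)
      · exact hadjuv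
      · exact (htadj.1).symm
    have hsubv : ({u, t} : Set V) ⊆ (E.Gs i).neighborSet v := by
      rintro y (rfl | rfl)
      · exact hadjuv.symm
      · exact (htadj.2).symm
    have hcard1 : ((E.Gs i).neighborSet u \ {v, t}).ncard = deg (E.Gs i) u - 2 := by
      rw [Set.ncard_diff hsubu (Set.toFinite _), Set.ncard_pair hvt]
      rfl
    have hcard2 : ((E.Gs i).neighborSet v \ {u, t}).ncard = deg (E.Gs i) v - 2 := by
      rw [Set.ncard_diff hsubv (Set.toFinite _), Set.ncard_pair hut]
      rfl
    have h1 := Set.ncard_le_ncard hsub (Set.toFinite _)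
    have h2 := Set.ncard_union_le ((fun w => s(u, w)) '' ((E.Gs i).neighborSet u \ {v, t}))
      ((fun w => s(v, w)) '' ((E.Gs i).neighborSet v \ {u, t}))
    have h3' : ((fun w => s(u, w)) '' ((E.Gs i).neighborSet u \ {v, t})).ncard
        ≤ ((E.Gs i).neighborSet u \ {v, t}).ncard :=
      Set.ncard_image_le (Set.toFinite _)
    have h4' : ((fun w => s(v, w)) '' ((E.Gs i).neighborSet v \ {u, t})).ncard
        ≤ ((E.Gs i).neighborSet v \ {u, t}).ncard :=
      Set.ncard_image_le (Set.toFinite _)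
    rw [hcard1] at h3'
    rw [hcard2] at h4'
    omega
  -- PART (c), lower bound
  have hW1W : W1 ⊆ W := by
    rw [hW1]
    rintro w ⟨hw, _⟩
    exact hw
  have hW2W : W2 ⊆ W := by
    rw [hW2]
    rintro w ⟨hw, _⟩
    exact hw
  have hW1adj : ∀ w ∈ W1, (E.Gs i).Adj w u ∧ (E.Gs i).Adj w v := by
    intro w hw
    have hw' := hw
    rw [hW1] at hw'
    obtain ⟨hwW, hdeq⟩ := hw'
    have hwW' := hwW
    rw [hW] at hwW'
    obtain ⟨hep', hor', hd3'⟩ := hwW'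
    have hineq : deg (E.Gs (i + 1)) w + 2 ≤ deg (E.Gs i) w := by omega
    exact adj_both_of_drop2 E hik (hep_ne_u w hep') (hep_ne_v w hep') hineq
  have hW1112 : W11 ∪ W12 ⊆ W1 := by
    rw [hW11, hW12]
    rintro w (h | h)
    · exact h.1
    · exact h.1
  have hWne : ∀ w ∈ W, w ≠ u ∧ w ≠ v := by
    intro w hw
    rw [hW] at hw
    exact ⟨hep_ne_u w hw.1, hep_ne_v w hw.1⟩
  have hdisj1112 : Disjoint W11 W12 := by
    rw [Set.disjoint_left]
    rintro w h11 h12'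
    rw [hW11] at h11
    rw [hW12] at h12'
    rcases h11.2 with ⟨_, h⟩ | ⟨h, _⟩
    · exact h h12'.2.2
    · exact h h12'.2.1
  have hdisjW12' : Disjoint W1 W2 := by
    rw [Set.disjoint_left, hW1, hW2]
    rintro w ⟨_, h1⟩ ⟨_, h2⟩
    omega
  have hclb : 2 * W12.ncard + 2 * W11.ncard + W2.ncard ≤ EW.ncard := by
    set W2u : Set V := {w ∈ W2 | (E.Gs i).Adj w u} with hW2u
    set W2v : Set V := {w ∈ W2 | ¬ (E.Gs i).Adj w u} with hW2v
    have hW2uW2 : W2u ⊆ W2 := fun w hw => hw.1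
    have hW2vW2 : W2v ⊆ W2 := fun w hw => hw.1
    set A1 : Set (Sym2 V) := (fun w => s(u, w)) '' (W11 ∪ W12) with hA1
    set B1 : Set (Sym2 V) := (fun w => s(v, w)) '' (W11 ∪ W12) with hB1
    set Cu : Set (Sym2 V) := (fun w => s(u, w)) '' W2u with hCu
    set Cv : Set (Sym2 V) := (fun w => s(v, w)) '' W2v with hCv
    have hneW1 : ∀ w ∈ W11 ∪ W12, w ≠ u ∧ w ≠ v := fun w hw => hWne w (hW1W (hW1112 hw))
    have hneW2 : ∀ w ∈ W2, w ≠ u ∧ w ≠ v := fun w hw => hWne w (hW2W hw)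
    have hnotW2 : ∀ w ∈ W11 ∪ W12, w ∉ W2 := fun w hw =>
      Set.disjoint_left.1 hdisjW12' (hW1112 hw)
    have hsub : A1 ∪ B1 ∪ Cu ∪ Cv ⊆ EW := by
      rw [hEW]
      rintro e (((⟨w, hw, rfl⟩ | ⟨w, hw, rfl⟩) | ⟨w, hw, rfl⟩) | ⟨w, hw, rfl⟩)
      · exact ⟨w, hW1W (hW1112 hw), Or.inl rfl,
          (SimpleGraph.mem_edgeSet _).2 ((hW1adj w (hW1112 hw)).1.symm)⟩
      · exact ⟨w, hW1W (hW1112 hw), Or.inr rfl,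
          (SimpleGraph.mem_edgeSet _).2 ((hW1adj w (hW1112 hw)).2.symm)⟩
      · exact ⟨w, hW2W (hW2uW2 hw), Or.inl rfl,
          (SimpleGraph.mem_edgeSet _).2 hw.2.symm⟩
      · refine ⟨w, hW2W (hW2vW2 hw), Or.inr rfl, ?_⟩
        have hw' := hW2W (hW2vW2 hw)
        rw [hW] at hw'
        rcases hw'.2.1 with h | h
        · exact absurd h hw.2
        · exact (SimpleGraph.mem_edgeSet _).2 h.symm
    -- cardinalities of the pieces
    have hinj_u : ∀ (S : Set V), (∀ w ∈ S, w ≠ u) →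
        ((fun w => s(u, w)) '' S).ncard = S.ncard := by
      intro S hS
      apply Set.ncard_image_of_injOn
      intro w1 hw1 w2 hw2 heq
      rcases Sym2.eq_iff.1 heq with ⟨_, h⟩ | ⟨h1, _⟩
      · exact h
      · exact absurd h1.symm (hS w2 hw2)
    have hinj_v : ∀ (S : Set V), (∀ w ∈ S, w ≠ v) →
        ((fun w => s(v, w)) '' S).ncard = S.ncard := by
      intro S hS
      apply Set.ncard_image_of_injOn
      intro w1 hw1 w2 hw2 heq
      rcases Sym2.eq_iff.1 heq with ⟨_, h⟩ | ⟨h1, _⟩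
      · exact h
      · exact absurd h1.symm (hS w2 hw2)
    have hcA1 : A1.ncard = (W11 ∪ W12).ncard :=
      hinj_u _ (fun w hw => (hneW1 w hw).1)
    have hcB1 : B1.ncard = (W11 ∪ W12).ncard :=
      hinj_v _ (fun w hw => (hneW1 w hw).2)
    have hcCu : Cu.ncard = W2u.ncard :=
      hinj_u _ (fun w hw => (hneW2 w (hW2uW2 hw)).1)
    have hcCv : Cv.ncard = W2v.ncard :=
      hinj_v _ (fun w hw => (hneW2 w (hW2vW2 hw)).2)
    -- mixed-edge disequalities
    have hmix : ∀ w1 w2 : V, w1 ≠ v → w2 ≠ u → s(u, w1) ≠ s(v, w2) := by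
      intro w1 w2 h1 h2 heq
      rcases Sym2.eq_iff.1 heq with ⟨hq, _⟩ | ⟨hq1, hq2⟩
      · exact huv hq
      · exact h2 hq1.symm
    have hsame_u : ∀ w1 w2 : V, w2 ≠ u → s(u, w1) = s(u, w2) → w1 = w2 := by
      intro w1 w2 h2 heq
      rcases Sym2.eq_iff.1 heq with ⟨_, h⟩ | ⟨hq1, hq2⟩
      · exact h
      · exact absurd hq1.symm h2
    have hsame_v : ∀ w1 w2 : V, w2 ≠ v → s(v, w1) = s(v, w2) → w1 = w2 := by
      intro w1 w2 h2 heq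
      rcases Sym2.eq_iff.1 heq with ⟨_, h⟩ | ⟨hq1, hq2⟩
      · exact h
      · exact absurd hq1.symm h2
    -- disjointness
    have hdAB : Disjoint A1 B1 := by
      rw [Set.disjoint_left]
      rintro e ⟨w1, hw1, rfl⟩ ⟨w2, hw2, heq⟩
      exact hmix w1 w2 (hneW1 w1 hw1).2 (hneW1 w2 hw2).1 heq.symm
    have hdACu : Disjoint A1 Cu := by
      rw [Set.disjoint_left]
      rintro e ⟨w1, hw1, rfl⟩ ⟨w2, hw2, heq⟩
      have := hsame_u w2 w1 (hneW1 w1 hw1).1 heq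
      exact hnotW2 w1 hw1 (this ▸ hW2uW2 hw2)
    have hdACv : Disjoint A1 Cv := by
      rw [Set.disjoint_left]
      rintro e ⟨w1, hw1, rfl⟩ ⟨w2, hw2, heq⟩
      exact hmix w1 w2 (hneW1 w1 hw1).2 (hneW2 w2 (hW2vW2 hw2)).1 heq.symm
    have hdBCu : Disjoint B1 Cu := by
      rw [Set.disjoint_left]
      rintro e ⟨w1, hw1, rfl⟩ ⟨w2, hw2, heq⟩
      exact hmix w2 w1 (hneW2 w2 (hW2uW2 hw2)).2 (hneW1 w1 hw1).1 heq
    have hdBCv : Disjoint B1 Cv := by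
      rw [Set.disjoint_left]
      rintro e ⟨w1, hw1, rfl⟩ ⟨w2, hw2, heq⟩
      have := hsame_v w2 w1 (hneW1 w1 hw1).2 heq
      exact hnotW2 w1 hw1 (this ▸ hW2vW2 hw2)
    have hdCuCv : Disjoint Cu Cv := by
      rw [Set.disjoint_left]
      rintro e ⟨w1, hw1, rfl⟩ ⟨w2, hw2, heq⟩
      exact hmix w1 w2 (hneW2 w1 (hW2uW2 hw1)).2 (hneW2 w2 (hW2vW2 hw2)).1 heq.symm
    have hcU : (A1 ∪ B1 ∪ Cu ∪ Cv).ncard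
        = A1.ncard + B1.ncard + Cu.ncard + Cv.ncard := by
      rw [Set.ncard_union_eq (by
          rw [Set.disjoint_union_left, Set.disjoint_union_left]
          exact ⟨⟨hdACv, hdBCv⟩, hdCuCv⟩) (Set.toFinite _) (Set.toFinite _),
        Set.ncard_union_eq (by
          rw [Set.disjoint_union_left]
          exact ⟨hdACu, hdBCu⟩) (Set.toFinite _) (Set.toFinite _),
        Set.ncard_union_eq hdAB (Set.toFinite _) (Set.toFinite _)]
    have hc1112 : (W11 ∪ W12).ncard = W11.ncard + W12.ncard :=
      Set.ncard_union_eq hdisj1112 (Set.toFinite _) (Set.toFinite _)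
    have hcW2 : W2u.ncard + W2v.ncard = W2.ncard := by
      rw [← Set.ncard_union_eq (by
          rw [Set.disjoint_left]
          rintro w ⟨_, h1⟩ ⟨_, h2⟩
          exact h2 h1) (Set.toFinite _) (Set.toFinite _)]
      congr 1
      ext w
      constructor
      · rintro (h | h)
        · exact h.1
        · exact h.1
      · intro h
        by_cases hadj : (E.Gs i).Adj w u
        · exact Or.inl ⟨h, hadj⟩
        · exact Or.inr ⟨h, hadj⟩
    have hle := Set.ncard_le_ncard hsub (Set.toFinite _)
    omega
  -- PART (b)
  have hpartb : ({q : V × V | IsUncanceledTransfer E E.M Mopt q.1 q.2 ∧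
      q.1 = v'}.ncard ≤ W11.ncard + W2.ncard) := by
    have hmain : {q : V × V | IsUncanceledTransfer E E.M Mopt q.1 q.2 ∧ q.1 = v'} ⊆
        (fun w => (v', w)) '' (W11 ∪ W2) := by
      rintro ⟨x, w⟩ ⟨⟨j, hunc⟩, hx⟩
      simp only at hx
      subst hx
      obtain ⟨htr, hnc⟩ := (uncanceledAt_iff E E.M Mopt j v' w).1 hunc
      obtain ⟨hF, hep, hmj, hdeg2⟩ := htr
      have hji : j = i + 1 := matched_unique E hmj hmv'
      rw [hji] at hnc hdeg2
      have hwne : ∀ j', ¬ matchedAt E j' w := endpoint_not_matched E hep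
      have hwv' : w ≠ v' := by rintro rfl; exact hwne (i + 1) hmv'
      have hwt : w ≠ t := by rintro rfl; exact hwne (i + 1) hmt
      have hwu : w ≠ u := hep_ne_u w hep
      have hwv : w ≠ v := hep_ne_v w hep
      have hadj1 : (E.Gs (i + 1)).Adj v' w := by
        refine edge_survives E (i + 1) (le_of_lt hi1k) (FEdge_adj hF) ?_ ?_
        · intro j' hj' hm
          have := matched_unique E hm hmv'
          omega
        · intro j' _ hm
          exact hwne j' hm
      have hnadj_t : ¬ (E.Gs (i + 1)).Adj w t := by
        intro h
        have hmem : w ∈ (E.Gs (i + 1)).neighborSet t := h.symm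
        rw [hnbt, Set.mem_singleton_iff] at hmem
        exact hwv' hmem
      have hnb2 : (E.Gs (i + 1 + 1)).neighborSet w
          = (E.Gs (i + 1)).neighborSet w \ {v'} := by
        rw [nbhd_succ E hi1k hwt hwv', ← htdef, ← hv'def]
        ext y
        simp only [Set.mem_diff, Set.mem_insert_iff, Set.mem_singleton_iff]
        constructor
        · rintro ⟨hy, hne⟩
          push_neg at hne
          exact ⟨hy, hne.2⟩
        · rintro ⟨hy, hne⟩
          refine ⟨hy, ?_⟩
          rintro (rfl | rfl)
          · exact hnadj_t hy
          · exact hne rfl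
      have hv'memN : v' ∈ (E.Gs (i + 1)).neighborSet w := hadj1.symm
      have hcard := Set.ncard_diff_singleton_of_mem hv'memN
      have hposN : 0 < deg (E.Gs (i + 1)) w := (deg_pos_iff _ w).2 ⟨v', hadj1.symm⟩
      have hdeg12 : deg (E.Gs (i + 1 + 1)) w = deg (E.Gs (i + 1)) w - 1 := by
        unfold deg
        rw [hnb2, hcard]
      have hd3w : 3 ≤ deg (E.Gs i) w := by
        have := deg_mono E ((by omega : i ≤ i + 1)) (le_of_lt hi1k) w
        rcases h3 w with h | h
        · omega
        · exact h
      have hcases : deg (E.Gs (i + 1)) w = 1 ∨ deg (E.Gs (i + 1)) w = 2 := by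
        omega
      rcases hcases with hcase | hcase
      · -- w ∈ W1
        have hineq : deg (E.Gs (i + 1)) w + 2 ≤ deg (E.Gs i) w := by omega
        obtain ⟨hau, hav⟩ := adj_both_of_drop2 E hik hwu hwv hineq
        have hGau : G.Adj w u := by
          have := adj_mono E (Nat.zero_le i) (le_of_lt hik) hau
          rw [E.init] at this
          exact this
        have hGav : G.Adj w v := by
          have := adj_mono E (Nat.zero_le i) (le_of_lt hik) hav
          rw [E.init] at this
          exact this
        have hMu : s(w, u) ∉ E.M := fun h =>
          not_mem_M_of_endpoint E hep h (Sym2.mem_mk_left _ _)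
        have hMv : s(w, v) ∉ E.M := fun h =>
          not_mem_M_of_endpoint E hep h (Sym2.mem_mk_left _ _)
        have hWmem : w ∈ W := by
          rw [hW]
          exact ⟨hep, Or.inl hau, hd3w⟩
        have hW1mem : w ∈ W1 := by
          rw [hW1]
          exact ⟨hWmem, hcase⟩
        by_cases hFu : FEdge G E.M Mopt w u <;> by_cases hFv : FEdge G E.M Mopt w v
        · -- both F-edges: the transfer is canceled, contradiction
          exfalso
          have huncu : uncanceledAt E E.M Mopt i u w := by
            rw [uncanceledAt_iff]
            refine ⟨⟨FEdge_comm.1 hFu, hep, hmu, by omega⟩, ?_⟩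
            rintro ⟨hdd, _, _⟩
            omega
          have huncv : uncanceledAt E E.M Mopt i v w := by
            rw [uncanceledAt_iff]
            refine ⟨⟨FEdge_comm.1 hFv, hep, hmv, by omega⟩, ?_⟩
            rintro ⟨hdd, _, _⟩
            omega
          exact hnc ⟨hcase, hadj1, i, by omega, u, i, by omega, v, huncu, huncv,
            fun h => huv (congrArg Prod.snd h)⟩
        · refine ⟨w, Or.inl ?_, rfl⟩
          rw [hW11]
          exact ⟨hW1mem, Or.inl ⟨hFu, hFv⟩⟩
        · refine ⟨w, Or.inl ?_, rfl⟩
          rw [hW11]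
          exact ⟨hW1mem, Or.inr ⟨hFu, hFv⟩⟩
        · -- neither: both edges in Mopt, contradicting that Mopt is a matching
          exfalso
          have hMoptu : s(w, u) ∈ Mopt := by
            by_contra hnm
            exact hFu ⟨(SimpleGraph.mem_edgeSet _).2 hGau, hMu, hnm⟩
          have hMoptv : s(w, v) ∈ Mopt := by
            by_contra hnm
            exact hFv ⟨(SimpleGraph.mem_edgeSet _).2 hGav, hMv, hnm⟩
          have hne : s(w, u) ≠ s(w, v) := by
            intro h
            rcases Sym2.eq_iff.1 h with ⟨_, h'⟩ | ⟨h1, _⟩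
            · exact huv h'
            · exact hwv h1
          exact hnf.1.1.2 _ hMoptu _ hMoptv hne w (Sym2.mem_mk_left _ _)
            (Sym2.mem_mk_left _ _)
      · -- w ∈ W2
        have hineq : deg (E.Gs (i + 1)) w < deg (E.Gs i) w := by omega
        have hor := adj_one_of_drop1 E hik hwu hwv hineq
        refine ⟨w, Or.inr ?_, rfl⟩
        rw [hW2]
        exact ⟨by rw [hW]; exact ⟨hep, hor, hd3w⟩, hcase⟩
    calc {q : V × V | IsUncanceledTransfer E E.M Mopt q.1 q.2 ∧ q.1 = v'}.ncard
        ≤ ((fun w => (v', w)) '' (W11 ∪ W2)).ncard :=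
          Set.ncard_le_ncard hmain (Set.toFinite _)
      _ ≤ (W11 ∪ W2).ncard := Set.ncard_image_le (Set.toFinite _)
      _ ≤ W11.ncard + W2.ncard := Set.ncard_union_le _ _
  exact ⟨parta, hpartb, hclb, hcub⟩

end

end MinGreedy
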